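/- For all natural numbers n, ∑_{j=0}^{n} j^3 · binomial(2n, n-j) = (n^2/2)·binomial(2n, n); equivalently, 2·∑_{j=0}^{n} j^3·binomial(2n, n-j) = n^2·binomial(2n, n). -/

import Mathlib

theorem sum_choose_B3 (n : ℕ) :
    2 * ∑ j ∈ Finset.range (n + 1), j ^ 3 * Nat.choose (2 * n) (n - j) =
      n ^ 2 * Nat.choose (2 * n) n := by
  have key : (2 : ℤ) * ∑ j ∈ Finset.range (n + 1),
      (j : ℤ) ^ 3 * Nat.choose (2 * n) (n - j) = (n : ℤ) ^ 2 * Nat.choose (2 * n) n := by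
    set G : ℕ → ℤ := fun j =>
      if j ≤ n then ((j : ℤ) ^ 3 + ((n : ℤ) - 1) * j ^ 2 + (n : ℤ) ^ 2) *
        Nat.choose (2 * n) (n - j) else 0 with hG
    have step : ∀ j ∈ Finset.range (n + 1),
        (2 : ℤ) * ((j : ℤ) ^ 3 * Nat.choose (2 * n) (n - j)) = G j - G (j + 1) := by
      intro j hj
      rw [Finset.mem_range] at hj
      have hjn : j ≤ n := Nat.lt_succ_iff.mp hj
      rcases eq_or_lt_of_le hjn with h | h
      · have h2 : ¬ (j + 1 ≤ n) := by omega
        have h3 : n - j = 0 := by omega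
        have hjz : (j : ℤ) = n := by exact_mod_cast h
        simp only [hG, if_pos hjn, if_neg h2, h3, Nat.choose_zero_right, Nat.cast_one]
        linear_combination ((n : ℤ) + (j : ℤ) ^ 2 + j) * hjz
      · -- j < n
        have h1 : j + 1 ≤ n := h
        have pascal : Nat.choose (2 * n) ((n - j - 1) + 1) * ((n - j - 1) + 1) =
            Nat.choose (2 * n) (n - j - 1) * (2 * n - (n - j - 1)) :=
          Nat.choose_succ_right_eq (2 * n) (n - j - 1)
        have cz : ((n : ℤ) + j + 1) * Nat.choose (2 * n) (n - (j + 1)) =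
            ((n : ℤ) - j) * Nat.choose (2 * n) (n - j) := by
          have e1 : (n - j - 1) + 1 = n - j := by omega
          rw [e1] at pascal
          have := congrArg (fun x : ℕ => (x : ℤ)) pascal
          push_cast at this
          have e2 : ((n - j : ℕ) : ℤ) = (n : ℤ) - j := by
            have : j ≤ n := hjn; push_cast [this]; ring
          have e3 : ((2 * n - (n - j - 1) : ℕ) : ℤ) = (n : ℤ) + j + 1 := by
            have h4 : n - j - 1 ≤ 2 * n := by omega
            have h5 : (2 * n - (n - j - 1) : ℕ) = n + j + 1 := by omega
            rw [h5]; push_cast; ring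
          have e4 : n - (j + 1) = n - j - 1 := by omega
          rw [e4]
          rw [e2, e3] at this
          linarith [this]
        have hne : ((n : ℤ) + j + 1) ≠ 0 := by positivity
        simp only [hG, if_pos hjn, if_pos h1]
        push_cast
        apply mul_left_cancel₀ hne
        linear_combination (((j : ℤ) + 1) ^ 3 + ((n : ℤ) - 1) * ((j : ℤ) + 1) ^ 2
          + (n : ℤ) ^ 2) * cz
    calc (2 : ℤ) * ∑ j ∈ Finset.range (n + 1), (j : ℤ) ^ 3 * Nat.choose (2 * n) (n - j)
        = ∑ j ∈ Finset.range (n + 1), (2 : ℤ) * ((j : ℤ) ^ 3 * Nat.choose (2 * n) (n - j)) := by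
          rw [Finset.mul_sum]
      _ = ∑ j ∈ Finset.range (n + 1), (G j - G (j + 1)) := Finset.sum_congr rfl step
      _ = G 0 - G (n + 1) := Finset.sum_range_sub' G (n + 1)
      _ = (n : ℤ) ^ 2 * Nat.choose (2 * n) n := by
          simp [hG, if_neg (by omega : ¬ n + 1 ≤ n)]
  exact_mod_cast key
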